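/- arXiv:1904.00858 — 4 statements merged into one kernel-verified Lean document; each statement's English description precedes it below -/
import Mathlib

section
/- For every complex number γ with |γ| < 1, the map from ℝ to ℝ given by ψ ↦ ψ + 2 Im log((1−γ)/(1−γe^{iψ})), where log denotes the principal branch, is strictly increasing. -/
open Complex

/-- for every complex `γ` with `|γ| < 1`, the map
`ψ ↦ ψ + 2 Im log((1 − γ)/(1 − γ e^{iψ}))` (principal branch) is strictly increasing on `ℝ`. -/
theorem prufer_step_strictMono (γ : ℂ) (hγ : ‖γ‖ < 1) :
    StrictMono (fun ψ : ℝ =>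
      ψ + 2 * (Complex.log ((1 - γ) / (1 - γ * Complex.exp (Complex.I * (ψ : ℂ))))).im) := by
  apply strictMono_of_deriv_pos
  intro ψ
  set w : ℂ := γ * Complex.exp (Complex.I * (ψ : ℂ)) with hw_def
  have hwnorm : ‖w‖ < 1 := by
    rw [hw_def, norm_mul, Complex.norm_exp]
    simp only [Complex.mul_re, Complex.I_re, Complex.ofReal_re, Complex.I_im, Complex.ofReal_im,
      mul_zero, zero_mul, sub_zero, zero_sub]
    norm_num
    exact hγ
  have hγ1 : (1 : ℂ) - γ ≠ 0 := by
    intro h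
    have : γ = 1 := by linear_combination -h
    rw [this] at hγ; simp at hγ
  have hγre : 0 < ((1 : ℂ) - γ).re := by
    have : |γ.re| ≤ ‖γ‖ := Complex.abs_re_le_norm γ
    simp only [Complex.sub_re, Complex.one_re]
    have := abs_le.mp this
    linarith
  have hwre : 0 < ((1 : ℂ) - w).re := by
    have : |w.re| ≤ ‖w‖ := Complex.abs_re_le_norm w
    simp only [Complex.sub_re, Complex.one_re]
    have := abs_le.mp this
    linarith
  have hw1 : (1 : ℂ) - w ≠ 0 := by
    intro h; rw [h] at hwre; simp at hwre
  -- the quotient lies in the slit plane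
  have hslit : (1 - γ) / (1 - w) ∈ Complex.slitPlane := by
    rw [Complex.mem_slitPlane_iff]
    by_cases him : (((1 : ℂ) - γ) / (1 - w)).im = 0
    · left
      have hre : (((1 : ℂ) - γ) / (1 - w)).re =
          (((1 : ℂ) - γ).re * ((1 : ℂ) - w).re + ((1 : ℂ) - γ).im * ((1 : ℂ) - w).im) /
            Complex.normSq (1 - w) := by rw [Complex.div_re]; ring
      have him' : (((1 : ℂ) - γ).im * ((1 : ℂ) - w).re - ((1 : ℂ) - γ).re * ((1 : ℂ) - w).im) /
          Complex.normSq (1 - w) = 0 := by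
        have h2 : (((1 : ℂ) - γ) / (1 - w)).im =
            (((1 : ℂ) - γ).im * ((1 : ℂ) - w).re - ((1 : ℂ) - γ).re * ((1 : ℂ) - w).im) /
              Complex.normSq (1 - w) := by rw [Complex.div_im]; ring
        rw [← h2]; exact him
      have hNpos : 0 < Complex.normSq (1 - w) := Complex.normSq_pos.mpr hw1
      have him'' : ((1 : ℂ) - γ).im * ((1 : ℂ) - w).re = ((1 : ℂ) - γ).re * ((1 : ℂ) - w).im := by
        have := (div_eq_zero_iff.mp him').resolve_right (ne_of_gt hNpos)
        linarith
      rw [hre]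
      apply div_pos _ hNpos
      have hkey : 0 < (((1 : ℂ) - γ).re * ((1 : ℂ) - w).re + ((1 : ℂ) - γ).im * ((1 : ℂ) - w).im)
          * ((1 : ℂ) - w).re := by
        have h3 : ((1 : ℂ) - γ).im * ((1 : ℂ) - w).im * ((1 : ℂ) - w).re =
            ((1 : ℂ) - γ).re * ((1 : ℂ) - w).im * ((1 : ℂ) - w).im := by
          calc ((1 : ℂ) - γ).im * ((1 : ℂ) - w).im * ((1 : ℂ) - w).re
              = (((1 : ℂ) - γ).im * ((1 : ℂ) - w).re) * ((1 : ℂ) - w).im := by ring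
            _ = ((1 : ℂ) - γ).re * ((1 : ℂ) - w).im * ((1 : ℂ) - w).im := by rw [him'']
        nlinarith [sq_nonneg (((1 : ℂ) - w).im), mul_pos hγre (mul_pos hwre hwre)]
      nlinarith [hkey, hwre]
    · right; exact him
  -- derivative of the inner complex function
  have hexp : HasDerivAt (fun t : ℝ => Complex.exp (Complex.I * (t : ℂ)))
      (Complex.exp (Complex.I * (ψ : ℂ)) * (Complex.I * 1)) ψ := by
    exact (Complex.ofRealCLM.hasDerivAt.const_mul Complex.I).cexp
  have hg : HasDerivAt (fun t : ℝ => (1 : ℂ) - γ * Complex.exp (Complex.I * (t : ℂ)))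
      (0 - γ * (Complex.exp (Complex.I * (ψ : ℂ)) * (Complex.I * 1))) ψ :=
    (hasDerivAt_const ψ (1 : ℂ)).sub (hexp.const_mul γ)
  have hF : HasDerivAt (fun t : ℝ => (1 - γ) / (1 - γ * Complex.exp (Complex.I * (t : ℂ))))
      ((0 * (1 - w) - (1 - γ) * (0 - γ * (Complex.exp (Complex.I * (ψ : ℂ)) * (Complex.I * 1))))
        / (1 - w) ^ 2) ψ :=
    (hasDerivAt_const ψ ((1 : ℂ) - γ)).div hg hw1
  have hlog : HasDerivAt
      (fun t : ℝ => Complex.log ((1 - γ) / (1 - γ * Complex.exp (Complex.I * (t : ℂ)))))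
      (((0 * (1 - w) - (1 - γ) * (0 - γ * (Complex.exp (Complex.I * (ψ : ℂ)) * (Complex.I * 1))))
        / (1 - w) ^ 2) / ((1 - γ) / (1 - w))) ψ := hF.clog_real hslit
  -- simplify the derivative value
  have hval : ((0 * (1 - w) - (1 - γ) * (0 - γ * (Complex.exp (Complex.I * (ψ : ℂ)) * (Complex.I * 1))))
        / (1 - w) ^ 2) / ((1 - γ) / (1 - w)) = Complex.I * w / (1 - w) := by
    rw [hw_def]
    field_simp
    ring
  rw [hval] at hlog
  have him : HasDerivAt
      (fun t : ℝ =>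
        (Complex.log ((1 - γ) / (1 - γ * Complex.exp (Complex.I * (t : ℂ))))).im)
      ((Complex.I * w / (1 - w)).im) ψ :=
    (Complex.imCLM.hasFDerivAt.comp_hasDerivAt ψ hlog)
  have hf : HasDerivAt (fun t : ℝ =>
      t + 2 * (Complex.log ((1 - γ) / (1 - γ * Complex.exp (Complex.I * (t : ℂ))))).im)
      (1 + 2 * (Complex.I * w / (1 - w)).im) ψ :=
    (hasDerivAt_id ψ).add (him.const_mul 2)
  rw [hf.deriv]
  -- positivity of the derivative
  have hIm : (Complex.I * w / (1 - w)).im =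
      ((Complex.I * w).im * ((1 : ℂ) - w).re - (Complex.I * w).re * ((1 : ℂ) - w).im) /
        Complex.normSq (1 - w) := by rw [Complex.div_im]; ring
  have hNpos : 0 < Complex.normSq (1 - w) := Complex.normSq_pos.mpr hw1
  have hnsq : Complex.normSq w < 1 := by
    have : Complex.normSq w = ‖w‖ ^ 2 := (Complex.sq_norm w).symm
    nlinarith [norm_nonneg w]
  rw [hIm]
  have key : 0 < Complex.normSq (1 - w) +
      2 * ((Complex.I * w).im * ((1 : ℂ) - w).re - (Complex.I * w).re * ((1 : ℂ) - w).im) := by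
    simp only [Complex.mul_im, Complex.mul_re, Complex.I_re, Complex.I_im, Complex.sub_re,
      Complex.sub_im, Complex.one_re, Complex.one_im, Complex.normSq_apply] at *
    nlinarith [hnsq]
  have heq : (1 : ℝ) +
      2 * (((Complex.I * w).im * ((1 : ℂ) - w).re - (Complex.I * w).re * ((1 : ℂ) - w).im) /
        Complex.normSq (1 - w)) =
      (Complex.normSq (1 - w) +
        2 * ((Complex.I * w).im * ((1 : ℂ) - w).re - (Complex.I * w).re * ((1 : ℂ) - w).im)) /
        Complex.normSq (1 - w) := by
    field_simp
  rw [heq]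
  exact div_pos key hNpos
end

section
/- Fix β > 0, n ≥ 1, θ ∈ ℝ and a ∈ ℝ. With respect to the filtration (F_k)_{0≤k≤n−1} where F_k is generated by γ_0^{(n)},…,γ_{k−1}^{(n)}, the process (ψ_k^{(n)}(θ,a) − kθ)_{0≤k≤n−1} is a martingale. -/
open MeasureTheory ProbabilityTheory Real Complex
open scoped ENNReal

/-- The Prüfer phases: `pruferPhase γ θ a k = ψ_k(θ, a)`, defined by `ψ_0(θ,a) = θ + a` and
`ψ_{k+1}(θ,a) = ψ_k(θ,a) + θ + 2 Im log((1 − γ_k)/(1 − γ_k e^{i ψ_k(θ,a)}))`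
(principal branch of the logarithm). -/
noncomputable def pruferPhase (γ : ℕ → ℂ) (θ a : ℝ) : ℕ → ℝ
  | 0 => θ + a
  | k + 1 => pruferPhase γ θ a k + θ +
      2 * (Complex.log ((1 - γ k) /
        (1 - γ k * Complex.exp (Complex.I * ((pruferPhase γ θ a k : ℝ) : ℂ))))).im

/-- The law on the open unit disc of `ℂ` with density `s (1 − |z|²)^{s−1}` with respect to the
uniform probability measure on the unit disc. -/
noncomputable def gammaLaw (s : ℝ) : Measure ℂ :=
  ((volume (Metric.ball (0 : ℂ) 1))⁻¹ • volume.restrict (Metric.ball (0 : ℂ) 1)).withDensity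
    (fun z => ENNReal.ofReal (s * (1 - ‖z‖ ^ 2) ^ (s - 1)))


section Aux

lemma aux_re_pos {z : ℂ} (hz : ‖z‖ < 1) : 0 < (1 - z).re := by
  simp only [Complex.sub_re, Complex.one_re]
  have : |z.re| ≤ ‖z‖ := Complex.abs_re_le_norm z
  have := abs_le.1 this
  linarith

lemma aux_ne {z : ℂ} (hz : ‖z‖ < 1) : (1 : ℂ) - z ≠ 0 := by
  intro h
  have := aux_re_pos hz
  rw [h] at this
  simp at this

lemma arg_sub_of {x y : ℂ} (hx : x ≠ 0) (hy : y ≠ 0)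
    (h : Complex.arg x - Complex.arg y ∈ Set.Ioc (-π) π) :
    Complex.arg (x / y) = Complex.arg x - Complex.arg y := by
  rw [← Complex.arg_coe_angle_toReal_eq_arg, Complex.arg_div_coe_angle hx hy,
    ← Real.Angle.coe_sub, Real.Angle.toReal_coe_eq_self_iff_mem_Ioc]
  exact h

lemma log_im_split {z w : ℂ} (hz : ‖z‖ < 1) (hw : ‖w‖ < 1) :
    (Complex.log ((1 - z) / (1 - w))).im
      = (Complex.log (1 - z)).im - (Complex.log (1 - w)).im := by
  rw [Complex.log_im, Complex.log_im, Complex.log_im]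
  apply arg_sub_of (aux_ne hz) (aux_ne hw)
  have h1 : |Complex.arg (1 - z)| < π / 2 :=
    Complex.abs_arg_lt_pi_div_two_iff.2 (Or.inl (aux_re_pos hz))
  have h2 : |Complex.arg (1 - w)| < π / 2 :=
    Complex.abs_arg_lt_pi_div_two_iff.2 (Or.inl (aux_re_pos hw))
  have h1 := abs_lt.1 h1
  have h2 := abs_lt.1 h2
  constructor <;> [linarith; linarith]

lemma gammaLaw_ball_compl (s : ℝ) : gammaLaw s (Metric.ball (0:ℂ) 1)ᶜ = 0 := by
  unfold gammaLaw
  rw [withDensity_apply _ measurableSet_ball.compl]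
  have : ((volume (Metric.ball (0 : ℂ) 1))⁻¹ • volume.restrict (Metric.ball (0 : ℂ) 1))
      (Metric.ball (0:ℂ) 1)ᶜ = 0 := by
    simp [Measure.restrict_apply measurableSet_ball.compl]
  rw [setLIntegral_measure_zero _ _ this]

lemma measurable_rpow_const' (c : ℝ) : Measurable fun x : ℝ => x ^ c := by
  have : (fun x : ℝ => x ^ c) = fun x => if x ≤ 0 then
      (if x = 0 then (if c = 0 then 1 else 0)
        else Real.exp (Real.log x * c) * Real.cos (c * π))
      else Real.exp (Real.log x * c) := by
    ext x
    by_cases h0 : x ≤ 0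
    · rw [if_pos h0, Real.rpow_def_of_nonpos h0]
    · rw [if_neg h0, Real.rpow_def_of_pos (not_le.1 h0)]
  rw [this]
  refine Measurable.ite (measurableSet_le measurable_id measurable_const) ?_ ?_
  · refine Measurable.ite (measurableSet_eq_fun measurable_id measurable_const) measurable_const ?_
    exact ((Real.measurable_log.mul_const c).exp.mul_const _)
  · exact (Real.measurable_log.mul_const c).exp

lemma measurable_w (s : ℝ) :
    Measurable (fun z : ℂ => ENNReal.ofReal (s * (1 - ‖z‖ ^ 2) ^ (s - 1))) := by
  refine ENNReal.measurable_ofReal.comp (Measurable.const_mul ?_ s)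
  exact (measurable_rpow_const' (s-1)).comp (measurable_const.sub (measurable_norm.pow_const 2))

lemma rot_preimage_ball (c : Circle) :
    (⇑(rotation c)) ⁻¹' (Metric.ball (0:ℂ) 1) = Metric.ball 0 1 := by
  ext z
  simp only [Set.mem_preimage, Metric.mem_ball, dist_zero_right, (rotation c).norm_map]

lemma rho_rot (c : Circle) :
    Measure.map (⇑(rotation c))
      ((volume (Metric.ball (0 : ℂ) 1))⁻¹ • volume.restrict (Metric.ball (0 : ℂ) 1))
      = (volume (Metric.ball (0 : ℂ) 1))⁻¹ • volume.restrict (Metric.ball (0 : ℂ) 1) := by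
  rw [Measure.map_smul]
  congr 1
  have h := (LinearIsometryEquiv.measurePreserving (rotation c)).restrict_preimage
    (s := Metric.ball (0:ℂ) 1) measurableSet_ball
  rw [rot_preimage_ball] at h
  exact h.map_eq

lemma gammaLaw_rot (s : ℝ) (c : Circle) :
    Measure.map (⇑(rotation c)) (gammaLaw s) = gammaLaw s := by
  have hR : Measurable (⇑(rotation c)) := (rotation c).continuous.measurable
  unfold gammaLaw
  ext A hA
  rw [Measure.map_apply hR hA, withDensity_apply _ (hA.preimage hR), withDensity_apply _ hA]
  conv_rhs => rw [← rho_rot c]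
  rw [setLIntegral_map hA (measurable_w s) hR]
  refine setLIntegral_congr_fun (hA.preimage hR) (fun z _ => ?_)
  simp only [(rotation c).norm_map]

lemma measurable_logim (c : ℂ) : Measurable (fun z : ℂ => (Complex.log (1 - z * c)).im) :=
  Complex.measurable_im.comp
    (Complex.measurable_log.comp (measurable_const.sub (measurable_id.mul_const c)))

lemma integrable_logim (μ : Measure ℂ) [IsFiniteMeasure μ] (c : ℂ) :
    Integrable (fun z : ℂ => (Complex.log (1 - z * c)).im) μ := by
  refine Integrable.mono' (integrable_const π) (measurable_logim c).aestronglyMeasurable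
    (ae_of_all _ fun z => ?_)
  rw [Real.norm_eq_abs, Complex.log_im]
  exact Complex.abs_arg_le_pi _

lemma key_integral (s ψ : ℝ) [IsFiniteMeasure (gammaLaw s)] :
    ∫ z, (Complex.log ((1 - z) / (1 - z * Complex.exp (Complex.I * (ψ:ℂ))))).im
      ∂(gammaLaw s) = 0 := by
  set c : ℂ := Complex.exp (Complex.I * (ψ:ℂ)) with hc
  have hcn : ‖c‖ = 1 := by
    rw [hc, mul_comm]
    exact Complex.norm_exp_ofReal_mul_I ψ
  have hae : ∀ᵐ z ∂(gammaLaw s), ‖z‖ < 1 := by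
    rw [ae_iff]
    have : {z : ℂ | ¬ ‖z‖ < 1} = (Metric.ball (0:ℂ) 1)ᶜ := by
      ext z; simp [Metric.mem_ball, Complex.dist_eq]
    rw [this]
    exact gammaLaw_ball_compl s
  have hcongr : (fun z : ℂ => (Complex.log ((1 - z) / (1 - z * c))).im)
      =ᵐ[gammaLaw s] fun z => (Complex.log (1 - z * 1)).im - (Complex.log (1 - z * c)).im := by
    filter_upwards [hae] with z hz
    rw [mul_one]
    have hzc : ‖z * c‖ < 1 := by
      rw [norm_mul]
      simpa [hcn] using hz
    exact log_im_split hz hzc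
  rw [integral_congr_ae hcongr, integral_sub (integrable_logim _ 1) (integrable_logim _ c),
    sub_eq_zero]
  have hmp : MeasurePreserving (⇑(rotation (Circle.exp ψ))) (gammaLaw s) (gammaLaw s) :=
    ⟨(rotation _).continuous.measurable, gammaLaw_rot s _⟩
  have := hmp.integral_comp (rotation (Circle.exp ψ)).toHomeomorph.measurableEmbedding
    (fun z : ℂ => (Complex.log (1 - z * 1)).im)
  rw [← this]
  refine integral_congr_ae (ae_of_all _ fun z => ?_)
  have : (rotation (Circle.exp ψ)) z = z * c := by
    rw [rotation_apply, hc, Circle.coe_exp, mul_comm (z:ℂ), mul_comm Complex.I]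
  simp only [this, mul_one]

lemma pruferPhase_congr (θ a : ℝ) (k : ℕ) (g g' : ℕ → ℂ) (h : ∀ j < k, g j = g' j) :
    pruferPhase g θ a k = pruferPhase g' θ a k := by
  induction k with
  | zero => rfl
  | succ k ih =>
    have hk : pruferPhase g θ a k = pruferPhase g' θ a k :=
      ih fun j hj => h j (hj.trans (Nat.lt_succ_self k))
    simp only [pruferPhase, hk, h k (Nat.lt_succ_self k)]

lemma pruferPhase_measurable (θ a : ℝ) (k : ℕ) :
    Measurable (fun g : ℕ → ℂ => pruferPhase g θ a k) := by
  induction k with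
  | zero => exact measurable_const
  | succ k ih =>
    simp only [pruferPhase]
    refine (ih.add measurable_const).add ?_
    refine (Complex.measurable_im.comp (Complex.measurable_log.comp ?_)).const_mul 2
    refine Measurable.div (measurable_const.sub (measurable_pi_apply k)) ?_
    refine measurable_const.sub ((measurable_pi_apply k).mul ?_)
    exact Complex.measurable_exp.comp
      ((Complex.measurable_ofReal.comp ih).const_mul Complex.I)

lemma pruferPhase_bound (θ a : ℝ) (k : ℕ) (g : ℕ → ℂ) :
    |pruferPhase g θ a k - k * θ| ≤ |θ + a| + 2 * π * k := by
  induction k with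
  | zero => simp [pruferPhase]
  | succ k ih =>
    have harg : |(Complex.log ((1 - g k) /
        (1 - g k * Complex.exp (Complex.I * ((pruferPhase g θ a k : ℝ) : ℂ))))).im| ≤ π := by
      rw [Complex.log_im]; exact Complex.abs_arg_le_pi _
    have : pruferPhase g θ a (k+1) - (k+1 : ℕ) * θ
        = (pruferPhase g θ a k - k * θ) + 2 * (Complex.log ((1 - g k) /
        (1 - g k * Complex.exp (Complex.I * ((pruferPhase g θ a k : ℝ) : ℂ))))).im := by
      simp only [pruferPhase]
      push_cast
      ring
    rw [this]
    calc |_ + _| ≤ |pruferPhase g θ a k - k * θ| + |2 * (Complex.log ((1 - g k) /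
        (1 - g k * Complex.exp (Complex.I * ((pruferPhase g θ a k : ℝ) : ℂ))))).im| := abs_add_le _ _
    _ ≤ (|θ + a| + 2 * π * k) + 2 * π := by
        refine add_le_add ih ?_
        rw [abs_mul]
        simpa using mul_le_mul_of_nonneg_left harg (by norm_num : (0:ℝ) ≤ |2|)
    _ = |θ + a| + 2 * π * (k+1 : ℕ) := by push_cast; ring

end Aux

/-- with respect to the filtration `(F_k)_{0 ≤ k ≤ n−1}` where `F_k` is generated
by `γ_0^{(n)}, …, γ_{k−1}^{(n)}`, the process `(ψ_k^{(n)}(θ, a) − kθ)_{0 ≤ k ≤ n−1}` is a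
martingale.  (The filtration and the process are frozen at time `n − 1`, so that the statement
is expressed with `ℕ`-indexed objects: the asserted martingale property for the truncated
objects is exactly the martingale property of `(ψ_k^{(n)}(θ,a) − kθ)_{0 ≤ k ≤ n−1}`.) -/
theorem prufer_phase_martingale (β : ℝ) (hβ : 0 < β) (n : ℕ) (hn : 1 ≤ n)
    (Ω : Type) (m : MeasurableSpace Ω) (P : Measure Ω) (_ : IsProbabilityMeasure P)
    (γ : ℕ → Ω → ℂ) (hmeas : ∀ j, Measurable (γ j))
    (hlaw : ∀ j : ℕ, j < n - 1 →
      Measure.map (γ j) P = gammaLaw ((β / 2) * ((n : ℝ) - 1 - j)))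
    (hindep : iIndepFun (fun j : Fin (n - 1) => γ j.1) P)
    (θ a : ℝ)
    (F : MeasureTheory.Filtration ℕ m)
    (hF : ∀ k : ℕ, F k =
      ⨆ j ∈ Finset.range (min k (n - 1)), MeasurableSpace.comap (γ j) inferInstance) :
    MeasureTheory.Martingale
      (fun k ω => pruferPhase (fun j => γ j ω) θ a (min k (n - 1))
        - (min k (n - 1) : ℝ) * θ) F P := by
  have hc : ∀ k : ℕ, (min (k:ℝ) ((n:ℝ) - 1)) = ((min k (n-1) : ℕ) : ℝ) := by
    intro k
    rw [Nat.cast_min, Nat.cast_sub hn, Nat.cast_one]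
  suffices h : MeasureTheory.Martingale
      (fun k ω => pruferPhase (fun j => γ j ω) θ a (min k (n - 1))
        - ((min k (n - 1) : ℕ) : ℝ) * θ) F P by
    have heq : (fun (k : ℕ) (ω : Ω) => pruferPhase (fun j => γ j ω) θ a (min k (n - 1))
        - (min k (n - 1) : ℝ) * θ)
        = fun k ω => pruferPhase (fun j => γ j ω) θ a (min k (n - 1))
        - ((min k (n - 1) : ℕ) : ℝ) * θ := by
      funext k ω
      rw [hc k]
    rw [heq]
    exact h
  set X : ℕ → Ω → ℝ := fun k ω => pruferPhase (fun j => γ j ω) θ a (min k (n - 1))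
    - ((min k (n - 1) : ℕ) : ℝ) * θ with hXdef
  -- measurability of the phase with respect to any σ-algebra making the first M variables meas.
  have hψmeas : ∀ (M : ℕ) (m' : MeasurableSpace Ω),
      (∀ j, j < M → @Measurable Ω ℂ m' _ (γ j)) →
      @Measurable Ω ℝ m' _ (fun ω => pruferPhase (fun j => γ j ω) θ a M) := by
    intro M m' hγ
    have heq : (fun ω => pruferPhase (fun j => γ j ω) θ a M)
        = (fun g : ℕ → ℂ => pruferPhase g θ a M) ∘
          (fun ω (j : ℕ) => if h : j < M then γ j ω else 0) := by
      funext ω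
      exact pruferPhase_congr θ a M _ _ (fun j hj => by simp [hj])
    rw [heq]
    refine (pruferPhase_measurable θ a M).comp (measurable_pi_lambda _ fun j => ?_)
    by_cases h : j < M
    · simpa only [dif_pos h] using hγ j h
    · simp only [dif_neg h]; exact measurable_const
  have hXmeas : ∀ (k : ℕ) (m' : MeasurableSpace Ω),
      (∀ j, j < min k (n-1) → @Measurable Ω ℂ m' _ (γ j)) → @Measurable Ω ℝ m' _ (X k) :=
    fun k m' h => ((hψmeas _ m' h).sub measurable_const)
  have hadp : StronglyAdapted F X := by
    intro k
    refine Measurable.stronglyMeasurable ?_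
    refine hXmeas k (F k) fun j hj => ?_
    have hle : MeasurableSpace.comap (γ j) inferInstance ≤ F k := by
      rw [hF k]
      exact le_iSup₂ (f := fun (j : ℕ) (_ : j ∈ Finset.range (min k (n-1))) =>
        MeasurableSpace.comap (γ j) inferInstance) j (Finset.mem_range.2 hj)
    exact (comap_measurable (γ j)).mono hle le_rfl
  have hXint : ∀ k, Integrable (X k) P := by
    intro k
    refine Integrable.mono' (integrable_const (|θ + a| + 2 * π * (min k (n-1))))
      ((hXmeas k m fun j _ => hmeas j).aestronglyMeasurable) (ae_of_all _ fun ω => ?_)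
    rw [Real.norm_eq_abs]
    exact pruferPhase_bound θ a (min k (n-1)) _
  refine martingale_nat hadp hXint fun i => ?_
  by_cases hi : i < n - 1
  · -- nontrivial step
    have hmin : min i (n-1) = i := min_eq_left hi.le
    have hmin' : min (i+1) (n-1) = i + 1 := min_eq_left (Nat.succ_le_of_lt hi)
    set ψi : Ω → ℝ := fun ω => pruferPhase (fun j => γ j ω) θ a i with hψidef
    set Z : Ω → ℝ := fun ω => 2 * (Complex.log ((1 - γ i ω) /
      (1 - γ i ω * Complex.exp (Complex.I * ((ψi ω : ℝ) : ℂ))))).im with hZdef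
    have hψim : Measurable ψi := hψmeas i m fun j _ => hmeas j
    have hZmeas : Measurable Z := by
      refine (Complex.measurable_im.comp (Complex.measurable_log.comp ?_)).const_mul 2
      refine Measurable.div (measurable_const.sub (hmeas i)) ?_
      refine measurable_const.sub ((hmeas i).mul ?_)
      exact Complex.measurable_exp.comp
        ((Complex.measurable_ofReal.comp hψim).const_mul Complex.I)
    have hZbd : ∀ ω, ‖Z ω‖ ≤ 2 * π := by
      intro ω
      rw [Real.norm_eq_abs, hZdef, abs_mul, Complex.log_im]
      simpa using mul_le_mul_of_nonneg_left (Complex.abs_arg_le_pi _) (by norm_num : (0:ℝ) ≤ |2|)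
    have hZint : Integrable Z P :=
      Integrable.mono' (integrable_const (2*π)) hZmeas.aestronglyMeasurable (ae_of_all _ hZbd)
    have hXsplit : X (i+1) = fun ω => X i ω + Z ω := by
      funext ω
      simp only [hXdef, hmin, hmin', pruferPhase, hZdef, hψidef]
      push_cast
      ring
    -- the conditional expectation of Z given F i vanishes
    have hZcond : (fun _ : Ω => (0:ℝ)) =ᵐ[P] P[Z | F i] := by
      refine ae_eq_condExp_of_forall_setIntegral_eq (F.le i) hZint
        (fun s _ _ => (integrable_zero _ _ _).integrableOn) (fun s hs _ => ?_)
        (StronglyMeasurable.aestronglyMeasurable stronglyMeasurable_zero)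
      -- main computation
      set V : Ω → (Fin i → ℂ) := fun ω j => γ j.1 ω with hVdef
      have hVmeas : Measurable V := measurable_pi_lambda _ fun j => hmeas j.1
      have hle : F i ≤ MeasurableSpace.comap V inferInstance := by
        rw [hF i, hmin]
        refine iSup₂_le fun j hj => ?_
        have hj' : j < i := Finset.mem_range.1 hj
        have hγj : γ j = (fun v : Fin i → ℂ => v ⟨j, hj'⟩) ∘ V := rfl
        rw [hγj, ← MeasurableSpace.comap_comp]
        exact MeasurableSpace.comap_mono
          (measurable_iff_comap_le.1 (measurable_pi_apply (⟨j, hj'⟩ : Fin i)))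
      obtain ⟨B, hB, rfl⟩ := MeasurableSpace.measurableSet_comap.1 (hle s hs)
      set Φ : (Fin i → ℂ) → ℝ :=
        fun v => pruferPhase (fun j => if h : j < i then v ⟨j, h⟩ else 0) θ a i with hΦdef
      have hΦmeas : Measurable Φ := by
        refine (pruferPhase_measurable θ a i).comp (measurable_pi_lambda _ fun j => ?_)
        by_cases h : j < i
        · simpa only [dif_pos h] using measurable_pi_apply (⟨j, h⟩ : Fin i)
        · simp only [dif_neg h]; exact measurable_const
      have hΦV : ∀ ω, Φ (V ω) = ψi ω := by
        intro ω
        exact pruferPhase_congr θ a i _ _ (fun j hj => by simp [hj, hVdef])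
      set G : (Fin i → ℂ) × ℂ → ℝ := fun p => Set.indicator B (fun _ => (1:ℝ)) p.1 *
        (2 * (Complex.log ((1 - p.2) /
          (1 - p.2 * Complex.exp (Complex.I * ((Φ p.1 : ℝ) : ℂ))))).im) with hGdef
      have hGmeas : Measurable G := by
        refine Measurable.mul ((measurable_const.indicator hB).comp measurable_fst) ?_
        refine (Complex.measurable_im.comp (Complex.measurable_log.comp ?_)).const_mul 2
        refine Measurable.div (measurable_const.sub measurable_snd) ?_
        refine measurable_const.sub (measurable_snd.mul ?_)
        exact Complex.measurable_exp.comp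
          ((Complex.measurable_ofReal.comp (hΦmeas.comp measurable_fst)).const_mul Complex.I)
      have hGbd : ∀ p, ‖G p‖ ≤ 2 * π := by
        intro p
        rw [Real.norm_eq_abs, hGdef, abs_mul]
        have h1 : |Set.indicator B (fun _ => (1:ℝ)) p.1| ≤ 1 := by
          by_cases h : p.1 ∈ B <;> simp [Set.indicator_of_mem, Set.indicator_of_notMem, h]
        have h2 : |2 * (Complex.log ((1 - p.2) /
            (1 - p.2 * Complex.exp (Complex.I * ((Φ p.1 : ℝ) : ℂ))))).im| ≤ 2 * π := by
          rw [abs_mul, Complex.log_im]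
          simpa using mul_le_mul_of_nonneg_left (Complex.abs_arg_le_pi _)
            (by norm_num : (0:ℝ) ≤ |2|)
        calc |Set.indicator B (fun _ => (1:ℝ)) p.1| * _ ≤ 1 * (2*π) :=
              mul_le_mul h1 h2 (abs_nonneg _) zero_le_one
        _ = 2 * π := one_mul _
      -- independence of V and γ i
      haveI : IsProbabilityMeasure (Measure.map (γ i) P) :=
        Measure.isProbabilityMeasure_map (hmeas i).aemeasurable
      haveI : IsProbabilityMeasure (Measure.map V P) :=
        Measure.isProbabilityMeasure_map hVmeas.aemeasurable
      have hindepVγ : IndepFun V (γ i) P := by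
        classical
        set S : Finset (Fin (n-1)) := Finset.univ.filter (fun j => j.1 < i) with hSdef
        set T : Finset (Fin (n-1)) := {(⟨i, hi⟩ : Fin (n-1))} with hTdef
        have hdisj : Disjoint S T := by
          rw [Finset.disjoint_singleton_right, hSdef]
          simp
        have hIF := hindep.indepFun_finset S T hdisj (fun j => hmeas j.1)
        have hg₁ : Measurable (fun (u : S → ℂ) (j : Fin i) =>
            u ⟨⟨j.1, j.2.trans hi⟩, by simp [hSdef, j.2]⟩) :=
          measurable_pi_lambda _ fun j => measurable_pi_apply _
        have hg₂ : Measurable (fun u : T → ℂ =>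
            u ⟨⟨i, hi⟩, Finset.mem_singleton_self _⟩) := measurable_pi_apply _
        exact hIF.comp hg₁ hg₂
      have hprod : Measure.map (fun ω => (V ω, γ i ω)) P
          = (Measure.map V P).prod (Measure.map (γ i) P) :=
        (indepFun_iff_map_prod_eq_prod_map_map hVmeas.aemeasurable
          (hmeas i).aemeasurable).1 hindepVγ
      have hGint : Integrable G ((Measure.map V P).prod (Measure.map (γ i) P)) :=
        Integrable.mono' (integrable_const (2*π)) hGmeas.aestronglyMeasurable
          (ae_of_all _ hGbd)
      -- the inner integral vanishes
      have hμ : Measure.map (γ i) P = gammaLaw ((β / 2) * ((n : ℝ) - 1 - i)) := hlaw i hi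
      haveI hfin : IsFiniteMeasure (gammaLaw ((β / 2) * ((n : ℝ) - 1 - i))) := by
        rw [← hμ]; infer_instance
      have hinner : ∀ v : Fin i → ℂ, ∫ z, G (v, z) ∂(Measure.map (γ i) P) = 0 := by
        intro v
        have : ∀ z : ℂ, G (v, z) = Set.indicator B (fun _ => (1:ℝ)) v *
            (2 * (Complex.log ((1 - z) /
              (1 - z * Complex.exp (Complex.I * ((Φ v : ℝ) : ℂ))))).im) := fun z => rfl
        simp_rw [this]
        rw [integral_const_mul, integral_const_mul, hμ, key_integral]
        ring
      -- put everything together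
      have hcalc : ∫ x in V ⁻¹' B, Z x ∂P = 0 := by
        have h0 : ∫ x in V ⁻¹' B, Z x ∂P = ∫ ω, Set.indicator (V ⁻¹' B) Z ω ∂P :=
          (integral_indicator (hB.preimage hVmeas)).symm
        have h1 : ∀ ω, Set.indicator (V ⁻¹' B) Z ω = G (V ω, γ i ω) := by
          intro ω
          by_cases h : V ω ∈ B
          · have hmem : ω ∈ V ⁻¹' B := h
            rw [Set.indicator_of_mem hmem]
            simp only [hGdef, Set.indicator_of_mem h, hΦV ω, one_mul, hZdef]
          · have hmem : ω ∉ V ⁻¹' B := h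
            rw [Set.indicator_of_notMem hmem]
            simp only [hGdef, Set.indicator_of_notMem h, zero_mul]
        rw [h0]
        simp_rw [h1]
        have h2 : ∫ ω, G (V ω, γ i ω) ∂P
            = ∫ p, G p ∂(Measure.map (fun ω => (V ω, γ i ω)) P) := by
          rw [integral_map (hVmeas.prodMk (hmeas i)).aemeasurable
            hGmeas.aestronglyMeasurable]
        rw [h2, hprod, integral_prod _ hGint]
        simp_rw [hinner]
        simp
      rw [hcalc]
      simp
    -- conclude the step
    rw [hXsplit]
    have hsum := condExp_add (μ := P) (m := F i) (hXint i) hZint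
    refine Filter.EventuallyEq.trans ?_ hsum.symm
    have e1 : X i =ᵐ[P] P[X i | F i] := Filter.EventuallyEq.of_eq
      (condExp_of_stronglyMeasurable (F.le i) (hadp i) (hXint i)).symm
    have := Filter.EventuallyEq.add e1 hZcond
    simpa [Pi.add_def] using this
  · -- frozen step
    have h1 : min i (n-1) = n-1 := min_eq_right (le_of_not_gt hi)
    have h2 : min (i+1) (n-1) = n-1 := min_eq_right ((le_of_not_gt hi).trans (Nat.le_succ i))
    have hfreeze : X (i+1) = X i := by
      funext ω
      simp only [hXdef, h1, h2]
    rw [hfreeze]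
    exact Filter.EventuallyEq.of_eq
      (condExp_of_stronglyMeasurable (F.le i) (hadp i) (hXint i)).symm
end

section
/- There exists a universal constant C > 0 such that for every m > 0, if X is a random variable with density m·(1−x)^{m−1} on [0,1] (a Beta(1, m) variable), then E[(log(1 − √X))²] ≤ C·(1/m + 1/m²). -/
open MeasureTheory Real
open scoped ENNReal

/-- The law of a `Beta(1, m)` random variable: the probability measure on `[0,1]` with density
`m (1 − x)^{m−1}` with respect to the Lebesgue measure. -/
noncomputable def betaOneLaw (m : ℝ) : Measure ℝ :=
  (volume.restrict (Set.Icc (0 : ℝ) 1)).withDensity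
    (fun x => ENNReal.ofReal (m * (1 - x) ^ (m - 1)))

lemma neg_log_le_rpow' {t a : ℝ} (ht : 0 < t) (ha : 0 < a) : -Real.log t ≤ t ^ (-a) / a := by
  have h1 : Real.log (t ^ (-a)) ≤ t ^ (-a) - 1 :=
    Real.log_le_sub_one_of_pos (Real.rpow_pos_of_pos ht _)
  rw [Real.log_rpow ht] at h1
  rw [le_div_iff₀ ha]
  nlinarith [Real.rpow_pos_of_pos ht (-a)]

/-- Pointwise bound: density times `(log(1-√x))²` is at most `(32/m + 8) (1-x)^{m/2-1}`. -/
lemma pointwise_bd {m x : ℝ} (hm : 0 < m) (hx : x ∈ Set.Icc (0:ℝ) 1) :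
    m * (1 - x) ^ (m - 1) * (Real.log (1 - Real.sqrt x)) ^ 2
      ≤ (32 / m + 8) * (1 - x) ^ (m / 2 - 1) := by
  obtain ⟨hx0, hx1⟩ := hx
  rcases eq_or_lt_of_le hx1 with rfl | hx1
  · have h0 : Real.log (1 - Real.sqrt 1) = 0 := by simp
    rw [h0]
    have : m * (1 - 1) ^ (m - 1) * (0:ℝ) ^ 2 = 0 := by ring
    rw [this]
    positivity
  · set t : ℝ := 1 - x with htdef
    have ht : 0 < t := by simp [htdef]; linarith
    have ht1 : t ≤ 1 := by simp [htdef]; linarith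
    have hu0 : 0 ≤ Real.sqrt x := Real.sqrt_nonneg x
    have hu1 : Real.sqrt x < 1 := by
      rw [show (1:ℝ) = Real.sqrt 1 by simp]
      exact Real.sqrt_lt_sqrt hx0 hx1
    set u : ℝ := Real.sqrt x with hudef
    have hux : u ^ 2 = x := Real.sq_sqrt hx0
    -- log (1-u) = log t - log (1+u)
    have hfact : t = (1 - u) * (1 + u) := by rw [htdef]; nlinarith
    have hlm : Real.log t = Real.log (1 - u) + Real.log (1 + u) := by
      rw [hfact]; exact Real.log_mul (by linarith) (by linarith)
    have hl1 : Real.log (1 + u) ≤ u := by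
      have := Real.log_le_sub_one_of_pos (show (0:ℝ) < 1 + u by linarith); linarith
    have hl2 : 0 ≤ Real.log (1 + u) := Real.log_nonneg (by linarith)
    have hl3 : x ≤ -Real.log t := by
      have := Real.log_le_sub_one_of_pos ht; rw [htdef] at this ⊢; linarith
    have hlt0 : Real.log t ≤ 0 := Real.log_nonpos (le_of_lt ht) ht1
    -- step A : (log(1-u))² ≤ 2 (log t)² + 2 (-log t)
    have hA : (Real.log (1 - u)) ^ 2 ≤ 2 * (Real.log t) ^ 2 + 2 * (-Real.log t) := by
      have h1 : Real.log (1 - u) = Real.log t - Real.log (1 + u) := by linarith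
      rw [h1]
      have hux' : (Real.log (1 + u)) ^ 2 ≤ x := by nlinarith
      nlinarith [sq_nonneg (Real.log t + Real.log (1 + u))]
    -- step B : bound the logs by powers of t
    have hB1 : -Real.log t ≤ (4 / m) * t ^ (-(m / 4)) := by
      have := neg_log_le_rpow' ht (show (0:ℝ) < m / 4 by linarith)
      rw [div_eq_mul_inv] at this
      calc -Real.log t ≤ t ^ (-(m/4)) * (m/4)⁻¹ := this
        _ = (4 / m) * t ^ (-(m/4)) := by field_simp
    have hpos4 : (0:ℝ) < t ^ (-(m/4)) := Real.rpow_pos_of_pos ht _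
    have hpos2 : (0:ℝ) < t ^ (-(m/2)) := Real.rpow_pos_of_pos ht _
    have hsq : t ^ (-(m/4)) * t ^ (-(m/4)) = t ^ (-(m/2)) := by
      rw [← Real.rpow_add ht]; ring_nf
    have hB2 : (Real.log t) ^ 2 ≤ (16 / m ^ 2) * t ^ (-(m/2)) := by
      have hnl : 0 ≤ -Real.log t := by linarith
      have : (-Real.log t) ^ 2 ≤ ((4 / m) * t ^ (-(m/4))) ^ 2 := by
        apply sq_le_sq' (by linarith) hB1
      calc (Real.log t) ^ 2 = (-Real.log t) ^ 2 := by ring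
        _ ≤ ((4 / m) * t ^ (-(m/4))) ^ 2 := this
        _ = (16 / m ^ 2) * (t ^ (-(m/4)) * t ^ (-(m/4))) := by ring
        _ = (16 / m ^ 2) * t ^ (-(m/2)) := by rw [hsq]
    have hB3 : t ^ (-(m/4)) ≤ t ^ (-(m/2)) :=
      Real.rpow_le_rpow_of_exponent_ge ht ht1 (by linarith)
    have hB : (Real.log (1 - u)) ^ 2 ≤ (32 / m ^ 2 + 8 / m) * t ^ (-(m/2)) := by
      have h8 : 2 * (-Real.log t) ≤ (8 / m) * t ^ (-(m/2)) := by
        have : (4 / m) * t ^ (-(m/4)) ≤ (4 / m) * t ^ (-(m/2)) := by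
          apply mul_le_mul_of_nonneg_left hB3 (by positivity)
        have he : (8:ℝ) / m * t ^ (-(m/2)) = 2 * ((4:ℝ) / m * t ^ (-(m/2))) := by ring
        rw [he]; linarith
      calc (Real.log (1 - u)) ^ 2 ≤ 2 * (Real.log t) ^ 2 + 2 * (-Real.log t) := hA
        _ ≤ 2 * ((16 / m ^ 2) * t ^ (-(m/2))) + (8 / m) * t ^ (-(m/2)) := by linarith
        _ = (32 / m ^ 2 + 8 / m) * t ^ (-(m/2)) := by ring
    -- step C : multiply by the density
    have hdnn : 0 ≤ m * t ^ (m - 1) := by positivity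
    calc m * t ^ (m - 1) * (Real.log (1 - u)) ^ 2
        ≤ m * t ^ (m - 1) * ((32 / m ^ 2 + 8 / m) * t ^ (-(m/2))) :=
          mul_le_mul_of_nonneg_left hB hdnn
      _ = (m * (32 / m ^ 2 + 8 / m)) * (t ^ (m - 1) * t ^ (-(m/2))) := by ring
      _ = (32 / m + 8) * t ^ (m / 2 - 1) := by
          rw [← Real.rpow_add ht]
          congr 1
          · field_simp
          · congr 1; ring

lemma intInt (p : ℝ) (hp : 0 < p) :
    IntervalIntegrable (fun x : ℝ => (1 - x) ^ (p - 1)) volume 0 1 := by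
  have := (intervalIntegral.intervalIntegrable_rpow' (a := 0) (b := 1) (r := p - 1)
    (by linarith)).comp_sub_left 1
  simpa using this.symm

lemma intVal (p : ℝ) (hp : 0 < p) : ∫ x in (0:ℝ)..1, (1 - x) ^ (p - 1) = 1 / p := by
  have h := intervalIntegral.integral_comp_sub_left (a := 0) (b := 1)
    (fun y : ℝ => y ^ (p - 1)) 1
  norm_num at h
  rw [h, integral_rpow (Or.inl (by linarith)), Real.one_rpow, Real.zero_rpow (by linarith)]
  field_simp
  rw [show p - 1 + 1 = p by ring, sub_zero, one_mul, div_self hp.ne']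

lemma lintVal (p c : ℝ) (hp : 0 < p) (hc : 0 ≤ c) :
    ∫⁻ x in Set.Icc (0:ℝ) 1, ENNReal.ofReal (c * (1 - x) ^ (p - 1))
      = ENNReal.ofReal (c * (1 / p)) := by
  have h1 : ∫⁻ x in Set.Icc (0:ℝ) 1, ENNReal.ofReal (c * (1 - x) ^ (p - 1))
      = ∫⁻ x in Set.Ioc (0:ℝ) 1, ENNReal.ofReal (c * (1 - x) ^ (p - 1)) := by
    rw [Measure.restrict_congr_set Ioc_ae_eq_Icc]
  have hInt : IntegrableOn (fun x : ℝ => c * (1 - x) ^ (p - 1)) (Set.Ioc 0 1) volume := by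
    have := ((intInt p hp).const_mul c)
    rwa [intervalIntegrable_iff_integrableOn_Ioc_of_le zero_le_one] at this
  have hnn : 0 ≤ᵐ[volume.restrict (Set.Ioc (0:ℝ) 1)]
      (fun x : ℝ => c * (1 - x) ^ (p - 1)) := by
    refine (ae_restrict_iff' measurableSet_Ioc).2 (ae_of_all _ fun x hx => ?_)
    exact mul_nonneg hc (Real.rpow_nonneg (by linarith [hx.2]) _)
  rw [h1, ← ofReal_integral_eq_lintegral_ofReal hInt hnn]
  congr 1
  rw [← intervalIntegral.integral_of_le zero_le_one, intervalIntegral.integral_const_mul,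
    intVal p hp]

/-- there is a universal constant `C > 0` such that for every `m > 0` and every
`Beta(1, m)`-distributed random variable `X`, `E[(log(1 − √X))²] ≤ C (1/m + 1/m²)`. -/
theorem beta_log_sq_moment_bound :
    ∃ C : ℝ, 0 < C ∧
      ∀ (m : ℝ), 0 < m →
      ∀ (Ω : Type) (_ : MeasurableSpace Ω) (P : Measure Ω), IsProbabilityMeasure P →
      ∀ (X : Ω → ℝ), Measurable X → Measure.map X P = betaOneLaw m →
        ∫⁻ ω, ENNReal.ofReal ((Real.log (1 - Real.sqrt (X ω))) ^ 2) ∂P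
          ≤ ENNReal.ofReal (C * (1 / m + 1 / m ^ 2)) := by
  refine ⟨64, by norm_num, ?_⟩
  intro m hm Ω _ P hP X hX hmap
  have hfm : Measurable fun x : ℝ => ENNReal.ofReal ((Real.log (1 - Real.sqrt x)) ^ 2) :=
    ENNReal.measurable_ofReal.comp
      ((Real.measurable_log.comp ((measurable_const.sub measurable_id).comp
        Real.continuous_sqrt.measurable)).pow_const 2)
  have hdm : Measurable fun x : ℝ => ENNReal.ofReal (m * (1 - x) ^ (m - 1)) := by
    apply ENNReal.measurable_ofReal.comp
    fun_prop
  have h1 : ∫⁻ ω, ENNReal.ofReal ((Real.log (1 - Real.sqrt (X ω))) ^ 2) ∂P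
      = ∫⁻ x, ENNReal.ofReal ((Real.log (1 - Real.sqrt x)) ^ 2) ∂(betaOneLaw m) := by
    rw [← hmap, lintegral_map hfm hX]
  rw [h1, betaOneLaw, lintegral_withDensity_eq_lintegral_mul _ hdm hfm]
  have hbm : Measurable fun x : ℝ => ENNReal.ofReal ((32 / m + 8) * (1 - x) ^ (m / 2 - 1)) := by
    apply ENNReal.measurable_ofReal.comp
    fun_prop
  calc ∫⁻ x in Set.Icc (0:ℝ) 1,
        ((fun x => ENNReal.ofReal (m * (1 - x) ^ (m - 1))) *
          fun x => ENNReal.ofReal ((Real.log (1 - Real.sqrt x)) ^ 2)) x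
      ≤ ∫⁻ x in Set.Icc (0:ℝ) 1,
          ENNReal.ofReal ((32 / m + 8) * (1 - x) ^ (m / 2 - 1)) := by
        refine setLIntegral_mono hbm fun x hx => ?_
        simp only [Pi.mul_apply]
        rw [← ENNReal.ofReal_mul (mul_nonneg hm.le (Real.rpow_nonneg (by linarith [hx.2]) _))]
        exact ENNReal.ofReal_le_ofReal (pointwise_bd hm hx)
    _ = ENNReal.ofReal ((32 / m + 8) * (1 / (m / 2))) :=
        lintVal (m / 2) (32 / m + 8) (by linarith) (by positivity)
    _ ≤ ENNReal.ofReal (64 * (1 / m + 1 / m ^ 2)) := by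
        apply ENNReal.ofReal_le_ofReal
        have h2 : (32 / m + 8) * (1 / (m / 2)) = 64 / m ^ 2 + 16 / m := by
          field_simp; ring
        rw [h2]
        have h4 : 16 / m ≤ 64 / m := by gcongr; norm_num
        have h3 : 64 * (1 / m + 1 / m ^ 2) = 64 / m + 64 / m ^ 2 := by ring
        rw [h3]; linarith
end

section
/- For every B ≥ 0 there exists a constant K = K(B) ≥ 0 with the following property. Let (Ω, F, P) be a probability space with a filtration (F_j)_{0≤j≤ℓ}, and let (R_j)_{0≤j≤ℓ} be an adapted, integrable real-valued process such that R_0 = 0, almost surely R_{j+1} − R_j ≤ 4π for all 0 ≤ j ≤ ℓ−1, almost surely R_{j_2} ≥ R_{j_1} − 2π for all 0 ≤ j_1 ≤ j_2 ≤ ℓ, and E[R_{j_2} − R_{j_1} | F_{j_1}] ≤ B almost surely for all 0 ≤ j_1 ≤ j_2 ≤ ℓ. Then E[R_ℓ²] ≤ K. -/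
open MeasureTheory ProbabilityTheory Real
open scoped ENNReal

private lemma sum_sq_half_eq (N : ℕ) :
    ∑ k ∈ Finset.range N, ((k : ℝ) + 1) ^ 2 * (1/2) ^ k
      = 12 - (2*(N:ℝ)^2 + 8*N + 12) * (1/2)^N := by
  induction N with
  | zero => norm_num
  | succ n ih =>
      rw [Finset.sum_range_succ, ih]
      push_cast
      ring

private lemma sum_sq_half_le (N : ℕ) :
    ∑ k ∈ Finset.range N, ((k : ℝ) + 1) ^ 2 * (1/2) ^ k ≤ 12 := by
  rw [sum_sq_half_eq]
  have h1 : (0:ℝ) ≤ (1/2:ℝ)^N := by positivity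
  have h2 : (0:ℝ) ≤ 2*(N:ℝ)^2 + 8*N + 12 := by positivity
  nlinarith

/-- for every `B ≥ 0` there is `K = K(B) ≥ 0` such that for any filtered
probability space, any adapted integrable process `(R_j)_{0 ≤ j ≤ ℓ}` with `R_0 = 0`,
increments a.s. bounded above by `4π`, a.s. `R_{j₂} ≥ R_{j₁} − 2π` for `j₁ ≤ j₂ ≤ ℓ`, and
`E[R_{j₂} − R_{j₁} | F_{j₁}] ≤ B` a.s. for all `j₁ ≤ j₂ ≤ ℓ`, one has `E[R_ℓ²] ≤ K`. -/
theorem bounded_conditional_drift_second_moment (B : ℝ) (hB : 0 ≤ B) :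
    ∃ K : ℝ, 0 ≤ K ∧
      ∀ (Ω : Type) (m : MeasurableSpace Ω) (P : Measure Ω), IsProbabilityMeasure P →
      ∀ (ℓ : ℕ) (F : MeasureTheory.Filtration ℕ m) (R : ℕ → Ω → ℝ),
        (∀ j, j ≤ ℓ → StronglyMeasurable[F j] (R j)) →
        (∀ j, j ≤ ℓ → Integrable (R j) P) →
        (∀ᵐ ω ∂P, R 0 ω = 0) →
        (∀ᵐ ω ∂P, ∀ j, j + 1 ≤ ℓ → R (j + 1) ω - R j ω ≤ 4 * π) →
        (∀ᵐ ω ∂P, ∀ j₁ j₂, j₁ ≤ j₂ → j₂ ≤ ℓ → R j₁ ω - 2 * π ≤ R j₂ ω) →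
        (∀ j₁ j₂, j₁ ≤ j₂ → j₂ ≤ ℓ →
          ∀ᵐ ω ∂P, (MeasureTheory.condExp (F j₁) P (fun ω' => R j₂ ω' - R j₁ ω')) ω ≤ B) →
        ∫⁻ ω, ENNReal.ofReal ((R ℓ ω) ^ 2) ∂P ≤ ENNReal.ofReal K := by
  have hπ : (0:ℝ) < π := Real.pi_pos
  set c : ℝ := 8 * π + 2 * B with hc_def
  have hc4 : 4 * π < c := by linarith
  have hc0 : 0 < c := by linarith
  refine ⟨12 * c ^ 2, by positivity, ?_⟩
  intro Ω m P hP ℓ F R hadp hint h0 hstep hmono hdrift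
  -- measurability of R ℓ w.r.t. the ambient σ-algebra
  have hml : Measurable (R ℓ) := ((hadp ℓ le_rfl).mono (F.le ℓ)).measurable
  -- KEY LEMMA (stopping-level argument)
  have key : ∀ a t : ℝ, -(4*π) ≤ a → a + 4*π ≤ t →
      (t - a - 2*π) * (P {ω | t ≤ R ℓ ω}).toReal
        ≤ (B + 2*π) * (P {ω | a - 2*π ≤ R ℓ ω}).toReal := by
    intro a t ha hat
    set T : Set Ω := {ω | t ≤ R ℓ ω} with hT_def
    set E : ℕ → Set Ω :=
      fun j => {ω | a ≤ R j ω} ∩ ⋂ i ∈ Finset.range j, {ω | R i ω < a} with hE_def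
    have hEmF : ∀ j, j ≤ ℓ → MeasurableSet[F j] (E j) := by
      intro j hj
      refine MeasurableSet.inter ?_ ?_
      · exact measurableSet_le measurable_const (hadp j hj).measurable
      · refine MeasurableSet.biInter (Set.to_countable _) ?_
        intro i hi
        have hij : i ≤ j := le_of_lt (Finset.mem_range.mp hi)
        exact measurableSet_lt
          (((hadp i (hij.trans hj)).mono (F.mono hij)).measurable) measurable_const
    have hEm : ∀ j, j ≤ ℓ → MeasurableSet (E j) := fun j hj => F.le j _ (hEmF j hj)
    have hTm : MeasurableSet T := measurableSet_le measurable_const hml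
    have htpos : 0 ≤ t - a - 2*π := by linarith
    -- per-j inequality
    have hj_ineq : ∀ j, j ≤ ℓ →
        (t - a - 2*π) * (P (E j ∩ T)).toReal ≤ (B + 2*π) * (P (E j)).toReal := by
      intro j hj
      have hIntsub : Integrable (fun ω => R ℓ ω - R j ω) P :=
        (hint ℓ le_rfl).sub (hint j hj)
      have h1 : ∫ ω in E j, (R ℓ ω - R j ω) ∂P ≤ B * (P (E j)).toReal := by
        rw [← setIntegral_condExp (F.le j) hIntsub (hEmF j hj)]
        calc ∫ ω in E j, (P[(fun ω' => R ℓ ω' - R j ω')|F j]) ω ∂P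
            ≤ ∫ _ω in E j, B ∂P := by
              refine setIntegral_mono_ae integrable_condExp.integrableOn
                (integrableOn_const (measure_ne_top _ _) enorm_ne_top) ?_
              exact hdrift j ℓ hj le_rfl
          _ = B * (P (E j)).toReal := by rw [setIntegral_const, smul_eq_mul, mul_comm]; rfl
      set g : Ω → ℝ := fun ω => R ℓ ω - R j ω + 2*π with hg_def
      have hg_int : IntegrableOn g (E j) P :=
        (hIntsub.add (integrable_const _)).integrableOn
      have hg_nonneg : 0 ≤ᶠ[ae (P.restrict (E j))] g := by
        refine ae_restrict_of_ae ?_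
        filter_upwards [hmono] with ω hω
        have := hω j ℓ hj le_rfl
        simp only [hg_def, Pi.zero_apply]
        linarith
      have hg_lb : ∀ᵐ ω ∂P, ω ∈ E j ∩ T → t - a - 2*π ≤ g ω := by
        filter_upwards [h0, hstep] with ω h0ω hstepω
        rintro ⟨⟨hja, hlt⟩, hTω⟩
        have hRj : R j ω ≤ a + 4*π := by
          cases j with
          | zero => rw [h0ω]; linarith
          | succ i =>
              have hi : R i ω < a := by
                have := Set.mem_iInter₂.mp hlt i (Finset.mem_range.mpr (Nat.lt_succ_self i))
                exact this
              have hs := hstepω i hj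
              linarith
        have hTt : t ≤ R ℓ ω := hTω
        simp only [hg_def]
        linarith
      calc (t - a - 2*π) * (P (E j ∩ T)).toReal
          = ∫ _ω in E j ∩ T, (t - a - 2*π) ∂P := by
            rw [setIntegral_const, smul_eq_mul, mul_comm]; rfl
        _ ≤ ∫ ω in E j ∩ T, g ω ∂P := by
            refine setIntegral_mono_on_ae
              (integrableOn_const (measure_ne_top _ _) enorm_ne_top)
              (hg_int.mono_set Set.inter_subset_left)
              (MeasurableSet.inter (hEm j hj) hTm) ?_
            filter_upwards [hg_lb] with ω hω hmem
            exact hω hmem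
        _ ≤ ∫ ω in E j, g ω ∂P :=
            setIntegral_mono_set hg_int hg_nonneg
              (HasSubset.Subset.eventuallyLE Set.inter_subset_left)
        _ = (∫ ω in E j, (R ℓ ω - R j ω) ∂P) + 2*π * (P (E j)).toReal := by
            rw [integral_add hIntsub.integrableOn
              (integrableOn_const (measure_ne_top _ _) enorm_ne_top)]
            rw [setIntegral_const, smul_eq_mul, mul_comm]; rfl
        _ ≤ B * (P (E j)).toReal + 2*π * (P (E j)).toReal := by linarith
        _ = (B + 2*π) * (P (E j)).toReal := by ring
    -- T is covered by the E j's
    have hTsub : T ⊆ ⋃ j ∈ Finset.range (ℓ+1), E j := by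
      intro ω hω
      classical
      have hex : ∃ j, a ≤ R j ω := ⟨ℓ, by
        have : t ≤ R ℓ ω := hω
        linarith⟩
      have hfle : Nat.find hex ≤ ℓ := Nat.find_min' hex (by
        have : t ≤ R ℓ ω := hω
        linarith)
      refine Set.mem_biUnion (Finset.mem_range.mpr (Nat.lt_succ_of_le hfle)) ?_
      refine ⟨Nat.find_spec hex, Set.mem_iInter₂.mpr ?_⟩
      intro i hi
      exact lt_of_not_ge (Nat.find_min hex (Finset.mem_range.mp hi))
    -- the E j are pairwise disjoint
    have hdisj0 : ∀ i j : ℕ, i < j → Disjoint (E i) (E j) := by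
      intro i j hlt
      refine Set.disjoint_left.mpr ?_
      rintro ω ⟨hωi, _⟩ ⟨_, hωj⟩
      have : R i ω < a := Set.mem_iInter₂.mp hωj i (Finset.mem_range.mpr hlt)
      exact absurd hωi (not_le.mpr this)
    have hdisj : (↑(Finset.range (ℓ+1)) : Set ℕ).PairwiseDisjoint E := by
      intro i _ j _ hij
      rcases lt_or_gt_of_ne hij with h|h
      · exact hdisj0 i j h
      · exact (hdisj0 j i h).symm
    -- summing
    have hsum1 : (P T).toReal ≤ ∑ j ∈ Finset.range (ℓ+1), (P (E j ∩ T)).toReal := by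
      have h1 : P T ≤ ∑ j ∈ Finset.range (ℓ+1), P (E j ∩ T) := by
        refine le_trans (measure_mono ?_) (measure_biUnion_finset_le _ _)
        intro ω hω
        obtain ⟨S, hS, hωS⟩ := Set.mem_iUnion₂.mp (hTsub hω)
        exact Set.mem_iUnion₂.mpr ⟨S, hS, hωS, hω⟩
      rw [← ENNReal.toReal_sum (fun j _ => measure_ne_top P _)]
      exact ENNReal.toReal_mono (ENNReal.sum_ne_top.mpr (fun j _ => measure_ne_top P _)) h1
    have hsum2 : ∑ j ∈ Finset.range (ℓ+1), (P (E j)).toReal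
        ≤ (P {ω | a - 2*π ≤ R ℓ ω}).toReal := by
      rw [← ENNReal.toReal_sum (fun j _ => measure_ne_top P _)]
      refine ENNReal.toReal_mono (measure_ne_top P _) ?_
      rw [← measure_biUnion_finset hdisj (fun j hj => hEm j (Nat.lt_succ_iff.mp (Finset.mem_range.mp hj)))]
      refine measure_mono_ae ?_
      filter_upwards [hmono] with ω hω hωU
      obtain ⟨j, hj, hωj⟩ := Set.mem_iUnion₂.mp hωU
      have hjℓ : j ≤ ℓ := Nat.lt_succ_iff.mp (Finset.mem_range.mp hj)
      have h1 : a ≤ R j ω := hωj.1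
      have h2 := hω j ℓ hjℓ le_rfl
      show a - 2*π ≤ R ℓ ω
      linarith
    calc (t - a - 2*π) * (P T).toReal
        ≤ (t - a - 2*π) * ∑ j ∈ Finset.range (ℓ+1), (P (E j ∩ T)).toReal :=
          mul_le_mul_of_nonneg_left hsum1 htpos
      _ = ∑ j ∈ Finset.range (ℓ+1), (t - a - 2*π) * (P (E j ∩ T)).toReal :=
          Finset.mul_sum _ _ _
      _ ≤ ∑ j ∈ Finset.range (ℓ+1), (B + 2*π) * (P (E j)).toReal := by
          refine Finset.sum_le_sum (fun j hj => ?_)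
          exact hj_ineq j (Nat.lt_succ_iff.mp (Finset.mem_range.mp hj))
      _ = (B + 2*π) * ∑ j ∈ Finset.range (ℓ+1), (P (E j)).toReal :=
          (Finset.mul_sum _ _ _).symm
      _ ≤ (B + 2*π) * (P {ω | a - 2*π ≤ R ℓ ω}).toReal :=
          mul_le_mul_of_nonneg_left hsum2 (by linarith)
  -- tail probabilities
  set q : ℕ → ℝ := fun k => (P {ω | (k:ℝ)*c - 4*π ≤ R ℓ ω}).toReal with hq_def
  have hq0 : q 0 ≤ 1 := by
    have h1 : P {ω | ((0:ℕ):ℝ)*c - 4*π ≤ R ℓ ω} ≤ 1 := prob_le_one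
    calc q 0 = (P {ω | ((0:ℕ):ℝ)*c - 4*π ≤ R ℓ ω}).toReal := rfl
      _ ≤ (1:ℝ≥0∞).toReal := ENNReal.toReal_mono ENNReal.one_ne_top h1
      _ = 1 := ENNReal.toReal_one
  have hc6 : 6*π ≤ c := by rw [hc_def]; linarith
  have hqstep : ∀ k, q (k+1) ≤ q k / 2 := by
    intro k
    have hkc : (0:ℝ) ≤ (k:ℝ)*c := mul_nonneg (Nat.cast_nonneg k) hc0.le
    have hk := key ((k:ℝ)*c - 2*π) (((k:ℝ)+1)*c - 4*π)
      (by linarith) (by nlinarith)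
    rw [show (k:ℝ)*c - 2*π - 2*π = (k:ℝ)*c - 4*π from by ring] at hk
    rw [show ((k:ℝ)+1)*c - 4*π - ((k:ℝ)*c - 2*π) - 2*π = 2*(B+2*π) from by
      rw [hc_def]; ring] at hk
    have hcast : (((k+1:ℕ)):ℝ) = (k:ℝ)+1 := by push_cast; ring
    have hq1 : q (k+1) = (P {ω | ((k:ℝ)+1)*c - 4*π ≤ R ℓ ω}).toReal := by
      simp only [hq_def, hcast]
    have hq2 : q k = (P {ω | (k:ℝ)*c - 4*π ≤ R ℓ ω}).toReal := rfl
    rw [hq1, hq2]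
    nlinarith [hk, hπ]
  have hqk : ∀ k, q k ≤ (1/2:ℝ)^k := by
    intro k
    induction k with
    | zero => simpa using hq0
    | succ n ih =>
        have h1 := hqstep n
        have : (1/2:ℝ)^(n+1) = (1/2:ℝ)^n / 2 := by ring
        rw [this]
        linarith
  -- measurable slabs
  set S : ℕ → Set Ω := fun k =>
    {ω | (k:ℝ)*c - 4*π ≤ R ℓ ω} ∩ {ω | R ℓ ω < ((k:ℝ)+1)*c - 4*π} with hS_def
  have hSm : ∀ k, MeasurableSet (S k) := fun k =>
    (measurableSet_le measurable_const hml).inter (measurableSet_lt hml measurable_const)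
  -- a.e. bounds on R ℓ
  have hub : ∀ᵐ ω ∂P, R ℓ ω ≤ 4*π*ℓ := by
    filter_upwards [h0, hstep] with ω h0ω hstepω
    have hind : ∀ j, j ≤ ℓ → R j ω ≤ 4*π*j := by
      intro j
      induction j with
      | zero => intro _; simp [h0ω]
      | succ i ih =>
          intro hj
          have h1 := hstepω i hj
          have h2 := ih (by omega)
          push_cast
          linarith
    simpa using hind ℓ le_rfl
  have hlb : ∀ᵐ ω ∂P, -(2*π) ≤ R ℓ ω := by
    filter_upwards [h0, hmono] with ω h0ω hmω
    have := hmω 0 ℓ (Nat.zero_le _) le_rfl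
    rw [h0ω] at this; linarith
  -- pointwise slab domination
  have hpt : ∀ᵐ ω ∂P, ENNReal.ofReal ((R ℓ ω)^2)
      ≤ ∑ k ∈ Finset.range (ℓ+1),
          Set.indicator (S k) (fun _ => ENNReal.ofReal ((((k:ℝ)+1)*c)^2)) ω := by
    filter_upwards [hub, hlb] with ω hu hl
    set x := R ℓ ω with hx
    have hx4 : 0 ≤ x + 4*π := by linarith
    set k := ⌊(x + 4*π)/c⌋₊ with hk
    have hk1 : (k:ℝ)*c ≤ x + 4*π := by
      have h := Nat.floor_le (div_nonneg hx4 hc0.le)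
      calc (k:ℝ)*c ≤ ((x+4*π)/c)*c := mul_le_mul_of_nonneg_right h hc0.le
        _ = x + 4*π := by field_simp
    have hk2 : x + 4*π < ((k:ℝ)+1)*c := by
      have h := Nat.lt_floor_add_one ((x+4*π)/c)
      calc x + 4*π = ((x+4*π)/c)*c := by field_simp
        _ < ((k:ℝ)+1)*c := mul_lt_mul_of_pos_right h hc0
    have hkN : k < ℓ+1 := by
      by_contra hcon
      push_neg at hcon
      have hcast : ((ℓ:ℝ)+1) ≤ (k:ℝ) := by exact_mod_cast hcon
      nlinarith
    have hmem : ω ∈ S k := ⟨by show (k:ℝ)*c - 4*π ≤ R ℓ ω; rw [← hx]; linarith,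
      by show R ℓ ω < ((k:ℝ)+1)*c - 4*π; rw [← hx]; linarith⟩
    have hx2 : x^2 ≤ (((k:ℝ)+1)*c)^2 := by
      have h1 : x ≤ ((k:ℝ)+1)*c := by linarith
      have h2 : -(((k:ℝ)+1)*c) ≤ x := by nlinarith [(Nat.cast_nonneg k : (0:ℝ) ≤ (k:ℝ))]
      exact sq_le_sq' h2 h1
    calc ENNReal.ofReal (x^2)
        ≤ Set.indicator (S k) (fun _ => ENNReal.ofReal ((((k:ℝ)+1)*c)^2)) ω := by
          rw [Set.indicator_of_mem hmem]
          exact ENNReal.ofReal_le_ofReal hx2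
      _ ≤ ∑ k ∈ Finset.range (ℓ+1),
            Set.indicator (S k) (fun _ => ENNReal.ofReal ((((k:ℝ)+1)*c)^2)) ω :=
          Finset.single_le_sum
            (f := fun i => Set.indicator (S i) (fun _ => ENNReal.ofReal ((((i:ℝ)+1)*c)^2)) ω)
            (fun i _ => zero_le) (Finset.mem_range.mpr hkN)
  -- assemble
  calc ∫⁻ ω, ENNReal.ofReal ((R ℓ ω)^2) ∂P
      ≤ ∫⁻ ω, ∑ k ∈ Finset.range (ℓ+1),
          Set.indicator (S k) (fun _ => ENNReal.ofReal ((((k:ℝ)+1)*c)^2)) ω ∂P :=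
        lintegral_mono_ae hpt
    _ = ∑ k ∈ Finset.range (ℓ+1), ∫⁻ ω,
          Set.indicator (S k) (fun _ => ENNReal.ofReal ((((k:ℝ)+1)*c)^2)) ω ∂P :=
        lintegral_finset_sum _ (fun k _ => Measurable.indicator measurable_const (hSm k))
    _ = ∑ k ∈ Finset.range (ℓ+1), ENNReal.ofReal ((((k:ℝ)+1)*c)^2) * P (S k) := by
        refine Finset.sum_congr rfl (fun k _ => ?_)
        rw [lintegral_indicator (hSm k), setLIntegral_const]
    _ ≤ ∑ k ∈ Finset.range (ℓ+1), ENNReal.ofReal ((((k:ℝ)+1)*c)^2 * (1/2)^k) := by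
        refine Finset.sum_le_sum (fun k _ => ?_)
        rw [ENNReal.ofReal_mul (by positivity)]
        refine mul_le_mul_right ?_ _
        calc P (S k) ≤ P {ω | (k:ℝ)*c - 4*π ≤ R ℓ ω} := measure_mono Set.inter_subset_left
          _ = ENNReal.ofReal (q k) := (ENNReal.ofReal_toReal (measure_ne_top P _)).symm
          _ ≤ ENNReal.ofReal ((1/2:ℝ)^k) := ENNReal.ofReal_le_ofReal (hqk k)
    _ = ENNReal.ofReal (∑ k ∈ Finset.range (ℓ+1), (((k:ℝ)+1)*c)^2 * (1/2)^k) :=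
        (ENNReal.ofReal_sum_of_nonneg (fun k _ => by positivity)).symm
    _ ≤ ENNReal.ofReal (12 * c^2) := by
        refine ENNReal.ofReal_le_ofReal ?_
        have heq : ∑ k ∈ Finset.range (ℓ+1), (((k:ℝ)+1)*c)^2 * (1/2)^k
            = c^2 * ∑ k ∈ Finset.range (ℓ+1), ((k:ℝ)+1)^2 * (1/2)^k := by
          rw [Finset.mul_sum]
          exact Finset.sum_congr rfl (fun k _ => by ring)
        rw [heq]
        have h12 := sum_sq_half_le (ℓ+1)
        nlinarith [sq_nonneg c]
end
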